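/- Let A be a commutative ring, I a proper ideal, and f ∈ A. Then f is integral over I if and only if there exists a finitely generated A-module M such that (i) fM ⊆ IM, and (ii) whenever aM = 0 for some a ∈ A, there exists k ≥ 0 with a·f^k = 0. -/

import Mathlib

/-- `f` is integral over the ideal `I`: there is an equation
`f^k + a₁ f^(k-1) + ⋯ + a_k = 0` with `aᵢ ∈ Iⁱ` (and `k ≥ 1`). -/
def IsIntegralOverIdeal {A : Type*} [CommRing A] (I : Ideal A) (f : A) : Prop :=
  ∃ (k : ℕ) (a : ℕ → A), 0 < k ∧ (∀ i ∈ Finset.Icc 1 k, a i ∈ I ^ i) ∧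
    f ^ k + ∑ i ∈ Finset.Icc 1 k, a i * f ^ (k - i) = 0

universe u

/-- Any element of `I ^ i` lies in `J ^ i` for some finitely generated `J ≤ I`. -/
lemma exists_fg_le_mem_pow {A : Type u} [CommRing A] (I : Ideal A) :
    ∀ (i : ℕ) (x : A), x ∈ I ^ i → ∃ J : Ideal A, J.FG ∧ J ≤ I ∧ x ∈ J ^ i := by
  intro i
  induction i with
  | zero => intro x _; exact ⟨⊥, Submodule.fg_bot, bot_le, by simp⟩
  | succ i ih =>
    intro x hx
    rw [pow_succ] at hx
    refine Submodule.mul_induction_on hx ?_ ?_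
    · intro m hm n hn
      obtain ⟨J, hfg, hle, hmem⟩ := ih m hm
      refine ⟨J ⊔ Ideal.span {n}, Submodule.FG.sup hfg (Submodule.fg_span_singleton n),
        sup_le hle ((Ideal.span_singleton_le_iff_mem _).mpr hn), ?_⟩
      rw [pow_succ]
      exact Ideal.mul_mem_mul (Ideal.pow_right_mono le_sup_left i hmem)
        (le_sup_right (α := Ideal A) (Ideal.mem_span_singleton_self n))
    · rintro x y ⟨J₁, h1, l1, m1⟩ ⟨J₂, h2, l2, m2⟩
      exact ⟨J₁ ⊔ J₂, Submodule.FG.sup h1 h2, sup_le l1 l2,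
        add_mem (Ideal.pow_right_mono le_sup_left _ m1)
          (Ideal.pow_right_mono le_sup_right _ m2)⟩

/-- A common finitely generated subideal works for finitely many elements. -/
lemma exists_fg_le_mem_pow_finset {A : Type u} [CommRing A] (I : Ideal A) (a : ℕ → A)
    (s : Finset ℕ) (h : ∀ i ∈ s, a i ∈ I ^ i) :
    ∃ J : Ideal A, J.FG ∧ J ≤ I ∧ ∀ i ∈ s, a i ∈ J ^ i := by
  classical
  induction s using Finset.induction with
  | empty => exact ⟨⊥, Submodule.fg_bot, bot_le, by simp⟩
  | @insert c s hx ih =>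
    obtain ⟨J₁, h1, l1, m1⟩ := ih fun i hi => h i (Finset.mem_insert_of_mem hi)
    obtain ⟨J₂, h2, l2, m2⟩ := exists_fg_le_mem_pow I c (a c) (h c (Finset.mem_insert_self c s))
    refine ⟨J₁ ⊔ J₂, Submodule.FG.sup h1 h2, sup_le l1 l2, ?_⟩
    intro i hi
    rcases Finset.mem_insert.mp hi with rfl | hi
    · exact Ideal.pow_right_mono le_sup_right _ m2
    · exact Ideal.pow_right_mono le_sup_left _ (m1 i hi)

/-- `f` is integral over `I` iff there is a finitely generated
`A`-module `M` with `f·M ⊆ I·M` such that any `a` annihilating `M` satisfies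
`a·fᵏ = 0` for some `k`. -/
theorem isIntegralOverIdeal_iff_exists_module {A : Type u} [CommRing A]
    (I : Ideal A) (hI : I ≠ ⊤) (f : A) :
    IsIntegralOverIdeal I f ↔
      ∃ (M : Type u) (_ : AddCommGroup M) (_ : Module A M),
        Module.Finite A M ∧
        (∀ m : M, f • m ∈ I • (⊤ : Submodule A M)) ∧
        (∀ a : A, (∀ m : M, a • m = 0) → ∃ k : ℕ, a * f ^ k = 0) := by
  constructor
  · rintro ⟨k, a, hk, ha, heq⟩
    obtain ⟨J, hJfg, hJle, hJmem⟩ := exists_fg_le_mem_pow_finset I a (Finset.Icc 1 k) ha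
    -- the module : M = ∑_{j<k} (f^j) · J^(k-1-j)
    set M : Ideal A := ∑ j ∈ Finset.range k, Ideal.span {f ^ j} * J ^ (k - 1 - j) with hM
    have hterm : ∀ j ∈ Finset.range k, Ideal.span {f ^ j} * J ^ (k - 1 - j) ≤ M :=
      fun j hj => Finset.single_le_sum (f := fun j => Ideal.span {f ^ j} * J ^ (k - 1 - j))
        (fun i _ => bot_le) hj
    -- f^k ∈ J * M
    have hfk : f ^ k ∈ J * M := by
      have : f ^ k = -∑ i ∈ Finset.Icc 1 k, a i * f ^ (k - i) := by
        rw [eq_neg_iff_add_eq_zero]; exact heq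
      rw [this]
      refine neg_mem (Submodule.sum_mem _ fun i hi => ?_)
      obtain ⟨hi1, hik⟩ := Finset.mem_Icc.mp hi
      have hai : a i ∈ J * (J ^ (i - 1)) := by
        have : J * J ^ (i - 1) = J ^ i := by
          rw [← pow_succ']; congr 1; omega
        rw [this]; exact hJmem i hi
      have hfi : f ^ (k - i) ∈ Ideal.span {f ^ (k - i)} := Ideal.mem_span_singleton_self _
      have hprod : a i * f ^ (k - i) ∈ (J * J ^ (i - 1)) * Ideal.span {f ^ (k - i)} :=
        Ideal.mul_mem_mul hai hfi
      refine Set.mem_of_mem_of_subset hprod ?_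
      rw [mul_assoc]
      refine Ideal.mul_mono_right ?_
      rw [mul_comm]
      have hki : k - i ∈ Finset.range k := Finset.mem_range.mpr (by omega)
      have he : k - 1 - (k - i) = i - 1 := by omega
      rw [← he]
      exact hterm _ hki
    -- f · M ≤ J · M
    have hfM : Ideal.span {f} * M ≤ J * M := by
      rw [hM, Finset.mul_sum]
      refine Finset.sum_induction _ (fun N => N ≤ J * M)
        (fun x y hx hy => by rw [Submodule.add_eq_sup]; exact sup_le hx hy) bot_le ?_
      intro j hj
      have e1 : f * f ^ j = f ^ (j + 1) := (pow_succ' f j).symm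
      rw [← mul_assoc, Ideal.span_singleton_mul_span_singleton, e1]
      rcases Nat.lt_or_ge j (k - 1) with hjk | hjk
      · -- j < k - 1
        have e2 : J ^ (k - 1 - j) = J ^ (k - 1 - (j + 1)) * J := by
          rw [← pow_succ]; congr 1; omega
        rw [e2]
        calc Ideal.span {f ^ (j + 1)} * (J ^ (k - 1 - (j + 1)) * J)
            = J * (Ideal.span {f ^ (j + 1)} * J ^ (k - 1 - (j + 1))) := by ring
          _ ≤ J * M := Ideal.mul_mono_right
              (hterm _ (Finset.mem_range.mpr (by omega)))
      · -- j = k - 1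
        have hj1 : j = k - 1 := by
          have := Finset.mem_range.mp hj; omega
        have h0 : k - 1 - j = 0 := by omega
        have hjk' : j + 1 = k := by omega
        rw [h0, pow_zero, mul_one, hjk']
        exact (Ideal.span_singleton_le_iff_mem _).mpr hfk
    have hMfg : M.FG := by
      rw [hM]
      refine Finset.sum_induction _ _ (fun x y hx hy => by
        rw [Submodule.add_eq_sup]; exact Submodule.FG.sup hx hy) Submodule.fg_bot ?_
      intro j _
      exact Submodule.FG.mul (Submodule.fg_span_singleton _) (Submodule.FG.pow hJfg _)
    refine ⟨M, inferInstance, inferInstance, Module.Finite.iff_fg.mpr hMfg, ?_, ?_⟩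
    · intro m
      rw [Submodule.mem_smul_top_iff]
      have h1 : f * (m : A) ∈ Ideal.span {f} * M :=
        Ideal.mul_mem_mul (Ideal.mem_span_singleton_self f) m.2
      have h2 : f * (m : A) ∈ I * M := (hfM.trans (Ideal.mul_mono_left hJle)) h1
      have hc : ((f • m : M) : A) = f * (m : A) := rfl
      rw [hc]
      simpa [Ideal.smul_eq_mul] using h2
    · intro b hb
      have hmem : f ^ (k - 1) ∈ M := by
        have h1 : f ^ (k - 1) ∈ Ideal.span {f ^ (k - 1)} * J ^ (k - 1 - (k - 1)) := by
          rw [Nat.sub_self, pow_zero, mul_one]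
          exact Ideal.mem_span_singleton_self _
        exact hterm (k - 1) (Finset.mem_range.mpr (by omega)) h1
      refine ⟨k - 1, ?_⟩
      have h2 := congrArg Subtype.val (hb ⟨f ^ (k - 1), hmem⟩)
      simpa using h2
  · rintro ⟨M, _, _, hfin, hsmul, hann⟩
    have hnt : Nontrivial A := by
      by_contra h
      rw [not_nontrivial_iff_subsingleton] at h
      exact hI (Subsingleton.elim _ _)
    -- Cayley–Hamilton
    have hrange : LinearMap.range (algebraMap A (Module.End A M) f) ≤ I • ⊤ := by
      rintro x ⟨m, rfl⟩
      exact hsmul m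
    obtain ⟨p, hmonic, -, hcoeff, haeval⟩ :=
      LinearMap.exists_monic_and_coeff_mem_pow_and_aeval_eq_zero_of_range_le_smul A
        (algebraMap A (Module.End A M) f) I hrange
    have hpf : ∀ m : M, (p.eval f) • m = 0 := by
      intro m
      have h1 : Polynomial.aeval (algebraMap A (Module.End A M) f) p =
          algebraMap A (Module.End A M) (p.eval f) := by
        have := Polynomial.aeval_algHom_apply (Algebra.ofId A (Module.End A M)) f p
        simpa [Algebra.ofId_apply] using this
      have h0 : algebraMap A (Module.End A M) (p.eval f) = 0 := by rw [← h1, haeval]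
      have h2 := congrFun (congrArg DFunLike.coe h0) m
      simpa using h2
    obtain ⟨k, hk⟩ := hann (p.eval f) hpf
    set n := p.natDegree with hn
    by_cases hN : n + k = 0
    · exfalso
      have hn0 : n = 0 := by omega
      have hk0 : k = 0 := by omega
      have hp1 : p = 1 := (hmonic.natDegree_eq_zero).mp hn0
      rw [hp1, hk0] at hk
      simp at hk
    · refine ⟨n + k, fun i => if i ≤ n then p.coeff (n - i) else 0,
        Nat.pos_of_ne_zero hN, ?_, ?_⟩
      · intro i hi
        by_cases hin : i ≤ n
        · simp only [if_pos hin]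
          have := hcoeff (n - i)
          have he : n - (n - i) = i := by omega
          rwa [he] at this
        · simp only [if_neg hin]
          exact zero_mem _
      · have hz : ∀ x ∈ Finset.Icc 1 (n + k), x ∉ Finset.Icc 1 n →
            (if x ≤ n then p.coeff (n - x) else 0) * f ^ (n + k - x) = 0 := by
          intro x hx hx'
          have h1 : 1 ≤ x := (Finset.mem_Icc.mp hx).1
          have h2 : ¬ x ≤ n := fun hle => hx' (Finset.mem_Icc.mpr ⟨h1, hle⟩)
          rw [if_neg h2, zero_mul]
        have hsub : Finset.Icc 1 n ⊆ Finset.Icc 1 (n + k) :=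
          Finset.Icc_subset_Icc_right (Nat.le_add_right n k)
        have stepA : ∑ i ∈ Finset.Icc 1 (n + k),
            (if i ≤ n then p.coeff (n - i) else 0) * f ^ (n + k - i)
            = ∑ i ∈ Finset.Icc 1 n, p.coeff (n - i) * f ^ (n + k - i) := by
          rw [← Finset.sum_subset hsub hz]
          exact Finset.sum_congr rfl fun i hi => by
            rw [if_pos (Finset.mem_Icc.mp hi).2]
        have stepB : ∑ i ∈ Finset.Icc 1 n, p.coeff (n - i) * f ^ (n + k - i)
            = ∑ j ∈ Finset.range n, p.coeff j * f ^ (j + k) := by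
          refine Finset.sum_nbij' (fun i => n - i) (fun j => n - j) ?_ ?_ ?_ ?_ ?_
          · intro a ha
            have := Finset.mem_Icc.mp ha
            simp only [Finset.mem_range]
            omega
          · intro a ha
            have := Finset.mem_range.mp ha
            simp only [Finset.mem_Icc]
            omega
          · intro a ha; have := Finset.mem_Icc.mp ha; omega
          · intro a ha; have := Finset.mem_range.mp ha; omega
          · intro a ha
            have := Finset.mem_Icc.mp ha
            have he2 : n + k - a = (n - a) + k := by omega
            rw [he2]
        have stepC : (p.eval f) * f ^ k
            = ∑ j ∈ Finset.range n, p.coeff j * f ^ (j + k) + f ^ (n + k) := by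
          rw [Polynomial.eval_eq_sum_range, Finset.sum_mul, Finset.sum_range_succ]
          congr 1
          · exact Finset.sum_congr rfl fun j _ => by rw [mul_assoc, ← pow_add]
          · rw [hmonic.coeff_natDegree, one_mul, ← pow_add]
        rw [stepA, stepB, add_comm, ← stepC, hk]
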